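/- Let g : [0,1] → ℝ be given by g(x) = 1 - αx for some α ∈ [0,1], and let n ≥ 3. Then ((n-1)/n) · (∫₀¹ g(x)^{n-2} dx)² ≥ ∫₀¹ x·g(x)^{n-2} dx. -/

import Mathlib

open MeasureTheory intervalIntegral

theorem affine_case (α : ℝ) (hα0 : 0 ≤ α) (hα1 : α ≤ 1) (n : ℕ) (hn : 3 ≤ n) :
    ((n : ℝ) - 1) / n * (∫ x in (0:ℝ)..1, (1 - α * x) ^ (n - 2)) ^ 2 ≥
      ∫ x in (0:ℝ)..1, x * (1 - α * x) ^ (n - 2) := by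
  obtain ⟨m, rfl⟩ : ∃ m, n = m + 2 := ⟨n - 2, by omega⟩
  have hm1 : (1:ℕ) ≤ m := by omega
  simp only [Nat.add_sub_cancel]
  have hc1 : (0:ℝ) < m + 1 := by positivity
  have hc2 : (0:ℝ) < m + 2 := by positivity
  rcases eq_or_lt_of_le hα0 with h0 | hpos
  · -- α = 0
    subst h0
    simp only [zero_mul, sub_zero, one_pow, mul_one]
    rw [integral_one, integral_id]
    push_cast
    have hmr : (1:ℝ) ≤ m := by exact_mod_cast hm1
    have h12 : (1:ℝ)/2 ≤ ((m:ℝ)+2-1)/((m:ℝ)+2) := by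
      rw [div_le_div_iff₀ two_pos hc2]; nlinarith
    norm_num
    linarith
  · set β : ℝ := 1 - α with hβ
    have hβ0 : 0 ≤ β := by simp [hβ]; linarith
    have hderiv : ∀ x : ℝ, HasDerivAt (fun y => 1 - α * y) (-α) x := by
      intro x
      simpa using ((hasDerivAt_id x).const_mul α).const_sub 1
    have hI1 : (∫ x in (0:ℝ)..1, (1 - α * x) ^ m) = (1 - β ^ (m+1)) / ((m+1) * α) := by
      have h : ∀ x ∈ Set.uIcc (0:ℝ) 1,
          HasDerivAt (fun y => -(1 - α * y)^(m+1) / ((m+1) * α)) ((1 - α * x)^m) x := by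
        intro x _
        have h1 := (((hderiv x).pow (m+1)).neg).div_const ((m+1) * α)
        refine h1.congr_deriv ?_
        push_cast [Nat.add_sub_cancel, show m + 2 - 1 = m + 1 by omega]
        field_simp
      rw [integral_eq_sub_of_hasDerivAt h]
      · simp only [mul_one, mul_zero, sub_zero, one_pow, ← hβ]
        field_simp
        ring
      · apply Continuous.intervalIntegrable
        continuity
    have hI2 : (∫ x in (0:ℝ)..1, x * (1 - α * x) ^ m) =
        (1/((m+1)*(m+2)) - β^(m+1)/(m+1) + β^(m+1)*β/(m+2)) / α^2 := by
      have h : ∀ x ∈ Set.uIcc (0:ℝ) 1,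
          HasDerivAt (fun y => ((1 - α * y)^(m+2)/(m+2) - (1 - α * y)^(m+1)/(m+1)) / α^2)
            (x * (1 - α * x)^m) x := by
        intro x _
        have h1 := ((((hderiv x).pow (m+2)).div_const (m+2)).sub
          (((hderiv x).pow (m+1)).div_const (m+1))).div_const (α^2)
        refine h1.congr_deriv ?_
        push_cast [Nat.add_sub_cancel, show m + 2 - 1 = m + 1 by omega]
        field_simp
        ring
      rw [integral_eq_sub_of_hasDerivAt h]
      · simp only [mul_one, mul_zero, sub_zero, one_pow, ← hβ, pow_succ]
        field_simp
        ring
      · apply Continuous.intervalIntegrable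
        continuity
    rw [hI1, hI2]
    set P : ℝ := β ^ (m+1) with hP
    have hP0 : 0 ≤ P := pow_nonneg hβ0 _
    have hbern : (m+1:ℝ) * β - m ≤ P := by
      have := one_add_mul_le_pow (a := -α) (by linarith) (m+1)
      have heq : (1 + -α) = β := by rw [hβ]; ring
      rw [heq] at this
      push_cast at this ⊢
      nlinarith [this]
    have ha : α ≠ 0 := ne_of_gt hpos
    have h1 : ((m:ℝ)+1) ≠ 0 := by positivity
    have h2 : ((m:ℝ)+2) ≠ 0 := by positivity
    have key : ((m:ℝ) + 2 - 1)/((m:ℝ) + 2) * ((1 - P)/(((m:ℝ)+1)*α))^2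
        - (1/(((m:ℝ)+1)*((m:ℝ)+2)) - P/(((m:ℝ)+1)) + P*β/((m:ℝ)+2))/α^2
        = P * (P + (m:ℝ) - ((m:ℝ)+1)*β) / (((m:ℝ)+1) * ((m:ℝ)+2) * α^2) := by
      field_simp
      ring
    have hnum : 0 ≤ P * (P + (m:ℝ) - ((m:ℝ)+1)*β) / (((m:ℝ)+1) * ((m:ℝ)+2) * α^2) := by
      apply div_nonneg
      · apply mul_nonneg hP0; linarith
      · positivity
    push_cast
    rw [ge_iff_le]
    nlinarith [key, hnum]
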